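/- arXiv:1611.08073 — 4 statements merged into one kernel-verified Lean document; each statement's English description precedes it below -/
import Mathlib

section
/- Let t ∈ 𝕋 and z ∈ ℂ be such that H(t) − z·1 is invertible as a bounded operator on ℓ²(ℤ;V). Then for every η ∈ 𝕋 the endomorphism H(η,t) − z·1_V of V is invertible. Equivalently, for every η ∈ 𝕋 and t ∈ 𝕋 the spectrum of H(η,t) in End_ℂ(V) is contained in the spectrum of the bounded operator H(t). -/
/-!
STATEMENT 3: If H(t) − z·1 is invertible as a bounded operator on ℓ²(ℤ;V), then for every
η ∈ 𝕋 the endomorphism H(η,t) − z·1_V of V is invertible.  Equivalently, for every η, t the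
spectrum of the symbol H(η,t) is contained in the spectrum of the bounded operator H(t).
-/

noncomputable section

local notation "𝕋" => Metric.sphere (0 : ℂ) 1

/-- `ℓ²(ℤ; V)`, the Hilbert space of square-summable `V`-valued sequences. -/
abbrev L2 (V : Type) [NormedAddCommGroup V] : Type := lp (fun _ : ℤ => V) 2

open scoped ENNReal

lemma mismatch_card (k : ℕ) (j : ℤ) :
    ((Finset.Icc (j - k) (j + k) ∪ Finset.Icc (-(k:ℤ)) k).filter
      (fun n => ¬ ((n - j ∈ Finset.Icc (-(k:ℤ)) k) ↔ n ∈ Finset.Icc (-(k:ℤ)) k))).card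
      ≤ 2 * min j.natAbs (2 * k + 1) := by
  classical
  set I : Finset ℤ := Finset.Icc (-(k:ℤ)) k with hI
  set J : Finset ℤ := Finset.Icc (j - k) (j + k) with hJ
  have hmemI : ∀ n : ℤ, n ∈ I ↔ -(k:ℤ) ≤ n ∧ n ≤ k := fun n => Finset.mem_Icc
  have hmemJ : ∀ n : ℤ, n ∈ J ↔ j - k ≤ n ∧ n ≤ j + k := fun n => Finset.mem_Icc
  have hsub : (J ∪ I).filter
      (fun n => ¬ ((n - j ∈ I) ↔ n ∈ I)) ⊆ (I \ J) ∪ (J \ I) := by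
    intro n hn
    rw [Finset.mem_filter] at hn
    obtain ⟨hn1, hn2⟩ := hn
    have hJI : n - j ∈ I ↔ n ∈ J := by
      rw [hmemI, hmemJ]; omega
    rw [hJI] at hn2
    rw [Finset.mem_union, Finset.mem_sdiff, Finset.mem_sdiff]
    rw [Finset.mem_union] at hn1
    tauto
  have hIJ : (I \ J).card ≤ min j.natAbs (2 * k + 1) := by
    have h1 : I \ J ⊆ Finset.Icc (-(k:ℤ)) (j - k - 1) ∪ Finset.Icc (k + j + 1) k := by
      intro n hn
      rw [Finset.mem_sdiff, hmemI, hmemJ] at hn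
      rw [Finset.mem_union, Finset.mem_Icc, Finset.mem_Icc]
      omega
    have h2 : (I \ J).card ≤ j.natAbs := by
      calc (I \ J).card ≤ (Finset.Icc (-(k:ℤ)) (j - k - 1) ∪ Finset.Icc (k + j + 1) k).card :=
            Finset.card_le_card h1
        _ ≤ (Finset.Icc (-(k:ℤ)) (j - k - 1)).card + (Finset.Icc (k + j + 1) k).card :=
            Finset.card_union_le _ _
        _ = (j - k - 1 + 1 - -(k:ℤ)).toNat + ((k:ℤ) + 1 - (k + j + 1)).toNat := by
            rw [Int.card_Icc, Int.card_Icc]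
        _ ≤ j.natAbs := by omega
    have h3 : (I \ J).card ≤ 2 * k + 1 := by
      calc (I \ J).card ≤ I.card := Finset.card_le_card (Finset.sdiff_subset)
        _ = 2 * k + 1 := by rw [hI, Int.card_Icc]; omega
    omega
  have hJI : (J \ I).card ≤ min j.natAbs (2 * k + 1) := by
    have h1 : J \ I ⊆ Finset.Icc ((k:ℤ) + 1) (j + k) ∪ Finset.Icc (j - k) (-(k:ℤ) - 1) := by
      intro n hn
      rw [Finset.mem_sdiff, hmemI, hmemJ] at hn
      rw [Finset.mem_union, Finset.mem_Icc, Finset.mem_Icc]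
      omega
    have h2 : (J \ I).card ≤ j.natAbs := by
      calc (J \ I).card ≤ (Finset.Icc ((k:ℤ) + 1) (j + k) ∪ Finset.Icc (j - k) (-(k:ℤ) - 1)).card :=
            Finset.card_le_card h1
        _ ≤ (Finset.Icc ((k:ℤ) + 1) (j + k)).card + (Finset.Icc (j - k) (-(k:ℤ) - 1)).card :=
            Finset.card_union_le _ _
        _ = (j + k + 1 - ((k:ℤ) + 1)).toNat + (-(k:ℤ) - 1 + 1 - (j - k)).toNat := by
            rw [Int.card_Icc, Int.card_Icc]
        _ ≤ j.natAbs := by omega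
    have h3 : (J \ I).card ≤ 2 * k + 1 := by
      calc (J \ I).card ≤ J.card := Finset.card_le_card (Finset.sdiff_subset)
        _ = 2 * k + 1 := by rw [hJ, Int.card_Icc]; omega
    omega
  calc ((J ∪ I).filter (fun n => ¬ ((n - j ∈ I) ↔ n ∈ I))).card
      ≤ ((I \ J) ∪ (J \ I)).card := Finset.card_le_card hsub
    _ ≤ (I \ J).card + (J \ I).card := Finset.card_union_le _ _
    _ ≤ 2 * min j.natAbs (2 * k + 1) := by omega

lemma core {V : Type} [NormedAddCommGroup V] [NormedSpace ℂ V] [CompleteSpace V]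
    (Aj : ℤ → (V →L[ℂ] V)) (a : ℤ → ℝ)
    (hAa : ∀ j, ‖Aj j‖ ≤ a j) (ha0 : ∀ j, 0 ≤ a j) (hasum : Summable a)
    (T : L2 V →L[ℂ] L2 V) (z : ℂ)
    (hT : ∀ (φ : L2 V) (n : ℤ), T φ n = ∑' j : ℤ, Aj j (φ (n - j)))
    (η : ℂ) (hη : ‖η‖ = 1)
    (v : V) (hv : v ≠ 0)
    (hpt : (∑' j : ℤ, η ^ j • Aj j v) = z • v) :
    ¬ IsUnit (T - z • (1 : L2 V →L[ℂ] L2 V)) := by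
  classical
  intro hU
  obtain ⟨u, hu⟩ := hU
  set B : L2 V →L[ℂ] L2 V := T - z • (1 : L2 V →L[ℂ] L2 V) with hB
  set C : ℝ := ‖((↑u⁻¹ : L2 V →L[ℂ] L2 V))‖ with hC
  have hCbound : ∀ φ : L2 V, ‖φ‖ ≤ C * ‖B φ‖ := by
    intro φ
    have h1 : (↑u⁻¹ : L2 V →L[ℂ] L2 V) (B φ) = φ := by
      rw [← hu]
      have := congrArg (fun (f : L2 V →L[ℂ] L2 V) => f φ) u.inv_mul
      simp only [ContinuousLinearMap.mul_apply, ContinuousLinearMap.one_apply] at this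
      exact this
    calc ‖φ‖ = ‖(↑u⁻¹ : L2 V →L[ℂ] L2 V) (B φ)‖ := by rw [h1]
      _ ≤ C * ‖B φ‖ := ContinuousLinearMap.le_opNorm _ _
  have hv' : (0:ℝ) < ‖v‖ := norm_pos_iff.mpr hv
  have hηne : η ≠ 0 := by
    intro h; rw [h] at hη; simp at hη
  have hnz : ∀ m : ℤ, ‖η ^ m‖ = 1 := fun m => by rw [norm_zpow, hη, one_zpow]
  set Sa : ℝ := ∑' j : ℤ, a j with hSa
  have hSa0 : 0 ≤ Sa := tsum_nonneg ha0
  have hC0 : 0 ≤ C := norm_nonneg _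
  have hgnorm : ∀ (n j : ℤ), ‖η ^ (j - n) • Aj j v‖ ≤ a j * ‖v‖ := by
    intro n j
    rw [norm_smul, hnz, one_mul]
    exact le_trans ((Aj j).le_opNorm v) (mul_le_mul_of_nonneg_right (hAa j) (norm_nonneg v))
  have hgsum : ∀ n : ℤ, Summable (fun j : ℤ => η ^ (j - n) • Aj j v) :=
    fun n => Summable.of_norm_bounded (hasum.mul_right ‖v‖) (hgnorm n)
  have hgsum0 : Summable (fun j : ℤ => η ^ j • Aj j v) := by
    apply Summable.of_norm_bounded (hasum.mul_right ‖v‖)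
    intro j
    rw [norm_smul, hnz, one_mul]
    exact le_trans ((Aj j).le_opNorm v) (mul_le_mul_of_nonneg_right (hAa j) (norm_nonneg v))
  have hptn : ∀ n : ℤ, (∑' j : ℤ, η ^ (j - n) • Aj j v) = η ^ (-n) • (z • v) := by
    intro n
    rw [← hpt, ← Summable.tsum_const_smul _ hgsum0]
    congr 1; funext j
    rw [smul_smul, ← zpow_add₀ hηne]
    congr 2
    ring
  have h2R : ((2:ℝ≥0∞)).toReal = 2 := by norm_num
  have hrp : ∀ x : ℝ, x ^ ((2:ℝ≥0∞)).toReal = x ^ 2 := by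
    intro x
    rw [h2R, show (2:ℝ) = ((2:ℕ):ℝ) by norm_num, Real.rpow_natCast]
  have key : ∀ k : ℕ, (2*(k:ℝ)+1) ≤ C^2 * Sa *
      (2 * ∑' j : ℤ, a j * min |(j:ℝ)| (2*(k:ℝ)+1)) := by
    intro k
    set I : Finset ℤ := Finset.Icc (-(k:ℤ)) k with hI
    have hIcard : I.card = 2*k+1 := by rw [hI, Int.card_Icc]; omega
    set f : ∀ _ : ℤ, V := fun n => if n ∈ I then η ^ (-n) • v else 0 with hf
    have hfmem : Memℓp f 2 := by
      apply memℓp_gen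
      apply summable_of_ne_finset_zero (s := I)
      intro n hn
      rw [hf]
      simp only [if_neg hn, norm_zero]
      rw [hrp]
      norm_num
    set φ : L2 V := ⟨f, hfmem⟩ with hφ
    have hφap : ∀ n, φ n = f n := fun n => rfl
    have hφnorm : ‖φ‖ ^ 2 = (2*(k:ℝ)+1) * ‖v‖^2 := by
      rw [← hrp, lp.norm_rpow_eq_tsum (by rw [h2R]; norm_num) φ]
      rw [tsum_eq_sum (s := I) (by
        intro n hn
        rw [hφap, hf]
        simp only [if_neg hn, norm_zero]
        rw [hrp]; norm_num)]
      have : ∀ n ∈ I, ‖φ n‖ ^ ((2:ℝ≥0∞)).toReal = ‖v‖^2 := by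
        intro n hn
        rw [hφap, hf]
        simp only [if_pos hn]
        rw [norm_smul, hnz, one_mul, hrp]
      rw [Finset.sum_congr rfl this, Finset.sum_const, hIcard]
      push_cast
      ring
    set c : ℤ → ℤ → ℝ := fun n j => if (n - j ∈ I) ↔ (n ∈ I) then 0 else 1 with hc
    have hc0 : ∀ n j, 0 ≤ c n j := by
      intro n j; rw [hc]; dsimp only; split <;> norm_num
    have hc1 : ∀ n j, c n j ≤ 1 := by
      intro n j; rw [hc]; dsimp only; split <;> norm_num
    -- pointwise formula for B φ
    have hs1 : ∀ n : ℤ, Summable (fun j : ℤ => if n - j ∈ I then η ^ (j-n) • Aj j v else 0) := by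
      intro n
      apply Summable.of_norm_bounded (hasum.mul_right ‖v‖)
      intro j
      split
      · exact hgnorm n j
      · simp only [norm_zero]
        exact mul_nonneg (ha0 j) (norm_nonneg v)
    have hs2 : ∀ n : ℤ, Summable (fun j : ℤ => if n ∈ I then η ^ (j-n) • Aj j v else 0) := by
      intro n
      apply Summable.of_norm_bounded (hasum.mul_right ‖v‖)
      intro j
      split
      · exact hgnorm n j
      · simp only [norm_zero]
        exact mul_nonneg (ha0 j) (norm_nonneg v)
    have hBφ : ∀ n : ℤ, (B φ) n = ∑' j : ℤ,
        ((if n - j ∈ I then η ^ (j-n) • Aj j v else 0)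
          - (if n ∈ I then η ^ (j-n) • Aj j v else 0)) := by
      intro n
      have e0 : B φ = T φ - z • φ := by
        rw [hB]
        simp [ContinuousLinearMap.sub_apply, ContinuousLinearMap.smul_apply,
          ContinuousLinearMap.one_apply]
      have e1 : (B φ) n = T φ n - z • (φ n) := by
        rw [e0, lp.coeFn_sub, Pi.sub_apply, lp.coeFn_smul, Pi.smul_apply]
      have e2 : T φ n = ∑' j : ℤ, (if n - j ∈ I then η ^ (j-n) • Aj j v else 0) := by
        rw [hT φ n]
        congr 1; funext j
        by_cases hj : n - j ∈ I
        · rw [if_pos hj, hφap, hf]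
          simp only [if_pos hj]
          rw [map_smul]
          congr 1
          rw [neg_sub]
        · rw [if_neg hj, hφap, hf]
          simp only [if_neg hj]
          exact map_zero _
      have e3 : z • (φ n) = ∑' j : ℤ, (if n ∈ I then η ^ (j-n) • Aj j v else 0) := by
        by_cases hn : n ∈ I
        · simp only [hφap, hf, if_pos hn]
          rw [hptn n, smul_comm]
        · simp only [hφap, hf, if_neg hn, smul_zero, tsum_zero]
      rw [e1, e2, e3, ← Summable.tsum_sub (hs1 n) (hs2 n)]
    have hrhs_sum : ∀ n : ℤ, Summable (fun j : ℤ => (a j * ‖v‖) * c n j) := by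
      intro n
      apply Summable.of_nonneg_of_le
        (fun j => mul_nonneg (mul_nonneg (ha0 j) (norm_nonneg v)) (hc0 n j))
        (fun j => mul_le_of_le_one_right (mul_nonneg (ha0 j) (norm_nonneg v)) (hc1 n j))
        (hasum.mul_right ‖v‖)
    have hnormpt : ∀ n : ℤ, ‖(B φ) n‖ ≤ ∑' j : ℤ, (a j * ‖v‖) * c n j := by
      intro n
      rw [hBφ n]
      apply tsum_of_norm_bounded (hrhs_sum n).hasSum
      intro j
      by_cases h : (n - j ∈ I) ↔ (n ∈ I)
      · have hcz : c n j = 0 := by rw [hc]; exact if_pos h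
        rw [hcz, mul_zero]
        by_cases hn : n ∈ I
        · rw [if_pos (h.mpr hn), if_pos hn, sub_self, norm_zero]
        · rw [if_neg (fun hx => hn (h.mp hx)), if_neg hn, sub_self, norm_zero]
      · have hcz : c n j = 1 := by rw [hc]; exact if_neg h
        rw [hcz, mul_one]
        by_cases hn : n ∈ I
        · rw [if_neg (fun hx => h (iff_of_true hx hn)), if_pos hn, zero_sub, norm_neg]
          exact hgnorm n j
        · rw [if_pos ?_, if_neg hn, sub_zero]
          · exact hgnorm n j
          · by_contra hx
            exact h (iff_of_false hx hn)
    -- double sum machinery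
    set J : ℤ → Finset ℤ := fun j => Finset.Icc (j - k) (j + k) with hJ
    have hcsupp : ∀ (j n : ℤ), n ∉ J j ∪ I → c n j = 0 := by
      intro j n hn
      rw [Finset.mem_union] at hn
      push_neg at hn
      rw [hc]
      apply if_pos
      constructor
      · intro hx
        exfalso
        apply hn.1
        rw [hJ]
        simp only [Finset.mem_Icc]
        rw [hI, Finset.mem_Icc] at hx
        omega
      · intro hx; exact absurd hx hn.2
    have hrowsum : ∀ j : ℤ, Summable (fun n : ℤ => a j * c n j) := by
      intro j
      apply summable_of_ne_finset_zero (s := J j ∪ I)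
      intro n hn
      rw [hcsupp j n hn, mul_zero]
    have hrowbound : ∀ j : ℤ, ∑' n : ℤ, a j * c n j
        ≤ a j * (2 * min |(j:ℝ)| (2*(k:ℝ)+1)) := by
      intro j
      rw [tsum_eq_sum (s := J j ∪ I) (fun n hn => by rw [hcsupp j n hn, mul_zero]),
        ← Finset.mul_sum]
      apply mul_le_mul_of_nonneg_left ?_ (ha0 j)
      have hsum_card : ∑ n ∈ J j ∪ I, c n j
          = (((J j ∪ I).filter (fun n => ¬ ((n - j ∈ I) ↔ n ∈ I))).card : ℝ) := by
        rw [Finset.sum_congr rfl (fun n _ => show c n j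
            = if ¬ ((n - j ∈ I) ↔ n ∈ I) then (1:ℝ) else 0 by
          rw [hc]; dsimp only; rw [ite_not])]
        rw [Finset.sum_boole]
      rw [hsum_card]
      have hcard := mismatch_card k j
      calc (((J j ∪ I).filter (fun n => ¬ ((n - j ∈ I) ↔ n ∈ I))).card : ℝ)
          ≤ ((2 * min j.natAbs (2 * k + 1) : ℕ) : ℝ) := by
            exact_mod_cast hcard
        _ = 2 * min |(j:ℝ)| (2*(k:ℝ)+1) := by
            push_cast [Nat.cast_natAbs]
            ring
    set X : ℤ → ℝ := fun n => ∑' j : ℤ, a j * c n j with hX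
    set Q : ℝ := ∑' j : ℤ, a j * min |(j:ℝ)| (2*(k:ℝ)+1) with hQ
    set mfun : ℤ × ℤ → ℝ := fun p => a p.1 * c p.2 p.1 with hmfun
    have hm0 : 0 ≤ mfun := fun p => mul_nonneg (ha0 p.1) (hc0 p.2 p.1)
    have hQsum2 : Summable (fun j : ℤ => a j * (2 * min |(j:ℝ)| (2*(k:ℝ)+1))) := by
      apply Summable.of_nonneg_of_le
        (fun j => mul_nonneg (ha0 j)
          (mul_nonneg (by norm_num) (le_min (abs_nonneg _) (by positivity))))
        (fun j => ?_) (hasum.mul_right (2 * (2*(k:ℝ)+1)))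
      apply mul_le_mul_of_nonneg_left ?_ (ha0 j)
      have := min_le_right |(j:ℝ)| (2*(k:ℝ)+1)
      linarith
    have hQsum : Summable (fun j : ℤ => a j * min |(j:ℝ)| (2*(k:ℝ)+1)) := by
      apply Summable.of_nonneg_of_le
        (fun j => mul_nonneg (ha0 j) (le_min (abs_nonneg _) (by positivity)))
        (fun j => ?_) (hasum.mul_right (2*(k:ℝ)+1))
      exact mul_le_mul_of_nonneg_left (min_le_right _ _) (ha0 j)
    have hunc : Summable mfun := by
      rw [summable_prod_of_nonneg hm0]
      exact ⟨hrowsum, Summable.of_nonneg_of_le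
        (fun j => tsum_nonneg (fun n => mul_nonneg (ha0 j) (hc0 n j)))
        hrowbound hQsum2⟩
    have hswap_sum : Summable X := hunc.prod_symm.prod
    have hcolsum : ∀ n : ℤ, Summable (fun j : ℤ => a j * c n j) :=
      fun n => hunc.prod_symm.prod_factor n
    have hXle : ∀ n, X n ≤ Sa :=
      fun n => Summable.tsum_le_tsum (fun j => mul_le_of_le_one_right (ha0 j) (hc1 n j))
        (hcolsum n) hasum
    have hX0 : ∀ n, 0 ≤ X n := fun n => tsum_nonneg (fun j => mul_nonneg (ha0 j) (hc0 n j))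
    have hswap : ∑' n : ℤ, X n = ∑' j : ℤ, ∑' n : ℤ, a j * c n j :=
      Summable.tsum_comm' hunc hrowsum hcolsum
    have hBsq : Summable (fun n : ℤ => ‖(B φ) n‖^2) := by
      have := (memℓp_gen_iff (p := 2) (by rw [h2R]; norm_num)).1 (lp.memℓp (B φ))
      simpa only [hrp] using this
    have hstep : ∀ n : ℤ, ‖(B φ) n‖^2 ≤ ‖v‖^2 * Sa * X n := by
      intro n
      have h1 : ‖(B φ) n‖ ≤ ‖v‖ * X n := by
        refine le_trans (hnormpt n) (le_of_eq ?_)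
        calc ∑' j : ℤ, a j * ‖v‖ * c n j = ∑' j : ℤ, ‖v‖ * (a j * c n j) := by
              congr 1; funext j; ring
          _ = ‖v‖ * X n := tsum_mul_left
      calc ‖(B φ) n‖^2 ≤ (‖v‖ * X n)^2 := pow_le_pow_left₀ (norm_nonneg _) h1 2
        _ = ‖v‖^2 * (X n * X n) := by ring
        _ ≤ ‖v‖^2 * (Sa * X n) :=
            mul_le_mul_of_nonneg_left
              (mul_le_mul_of_nonneg_right (hXle n) (hX0 n)) (by positivity)
        _ = ‖v‖^2 * Sa * X n := by ring
    have hBφbound : ‖B φ‖^2 ≤ ‖v‖^2 * Sa * ∑' n : ℤ, X n := by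
      calc ‖B φ‖^2 = ∑' n : ℤ, ‖(B φ) n‖^2 := by
            rw [← hrp, lp.norm_rpow_eq_tsum (by rw [h2R]; norm_num) (B φ)]
            congr 1; funext n; rw [hrp]
        _ ≤ ∑' n : ℤ, ‖v‖^2 * Sa * X n :=
            Summable.tsum_le_tsum hstep hBsq (hswap_sum.mul_left _)
        _ = ‖v‖^2 * Sa * ∑' n : ℤ, X n := tsum_mul_left
    have hdouble : ∑' n : ℤ, X n ≤ 2 * Q := by
      rw [hswap]
      calc ∑' j : ℤ, ∑' n : ℤ, a j * c n j
          ≤ ∑' j : ℤ, a j * (2 * min |(j:ℝ)| (2*(k:ℝ)+1)) :=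
            Summable.tsum_le_tsum hrowbound hunc.prod hQsum2
        _ = 2 * Q := by
            rw [hQ, ← tsum_mul_left]
            congr 1; funext j; ring
    have h1 : ‖φ‖^2 ≤ C^2 * ‖B φ‖^2 := by
      calc ‖φ‖^2 ≤ (C * ‖B φ‖)^2 := pow_le_pow_left₀ (norm_nonneg φ) (hCbound φ) 2
        _ = C^2 * ‖B φ‖^2 := by ring
    have h2 : (2*(k:ℝ)+1) * ‖v‖^2 ≤ (C^2 * Sa * (2 * Q)) * ‖v‖^2 := by
      rw [← hφnorm]
      calc ‖φ‖^2 ≤ C^2 * ‖B φ‖^2 := h1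
        _ ≤ C^2 * (‖v‖^2 * Sa * ∑' n : ℤ, X n) :=
            mul_le_mul_of_nonneg_left hBφbound (sq_nonneg C)
        _ ≤ C^2 * (‖v‖^2 * Sa * (2 * Q)) := by
            apply mul_le_mul_of_nonneg_left ?_ (sq_nonneg C)
            exact mul_le_mul_of_nonneg_left hdouble (by positivity)
        _ = (C^2 * Sa * (2 * Q)) * ‖v‖^2 := by ring
    exact le_of_mul_le_mul_right h2 (by positivity)
  -- final limiting argument
  have hone : ∀ k : ℕ, (1:ℝ) ≤ C^2 * Sa *
      (2 * ∑' j : ℤ, a j * (min |(j:ℝ)| (2*(k:ℝ)+1) / (2*(k:ℝ)+1))) := by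
    intro k
    have hk : (0:ℝ) < 2*(k:ℝ)+1 := by positivity
    have hQdiv : ∑' j : ℤ, a j * (min |(j:ℝ)| (2*(k:ℝ)+1) / (2*(k:ℝ)+1))
        = (∑' j : ℤ, a j * min |(j:ℝ)| (2*(k:ℝ)+1)) / (2*(k:ℝ)+1) := by
      rw [← tsum_div_const]
      congr 1; funext j; ring
    rw [hQdiv]
    rw [show C^2 * Sa * (2 * ((∑' j : ℤ, a j * min |(j:ℝ)| (2*(k:ℝ)+1)) / (2*(k:ℝ)+1)))
        = (C^2 * Sa * (2 * ∑' j : ℤ, a j * min |(j:ℝ)| (2*(k:ℝ)+1))) / (2*(k:ℝ)+1) by ring]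
    rw [le_div_iff₀ hk, one_mul]
    exact key k
  have hinv : Filter.Tendsto (fun k : ℕ => (2*(k:ℝ)+1)⁻¹) Filter.atTop (nhds 0) := by
    apply Filter.Tendsto.inv_tendsto_atTop
    apply Filter.tendsto_atTop_add_const_right
    exact (tendsto_natCast_atTop_atTop).const_mul_atTop (by norm_num : (0:ℝ) < 2)
  have hlim0 : Filter.Tendsto
      (fun k : ℕ => ∑' j : ℤ, a j * (min |(j:ℝ)| (2*(k:ℝ)+1) / (2*(k:ℝ)+1)))
      Filter.atTop (nhds 0) := by
    have h := tendsto_tsum_of_dominated_convergence (𝓕 := Filter.atTop)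
      (f := fun (k : ℕ) (j : ℤ) => a j * (min |(j:ℝ)| (2*(k:ℝ)+1) / (2*(k:ℝ)+1)))
      (g := fun _ : ℤ => (0:ℝ)) (bound := a) hasum ?_ ?_
    · simpa using h
    · intro j
      apply squeeze_zero (fun k => ?_) (fun k => ?_)
        ((hinv.const_mul (a j * |(j:ℝ)|)).congr'
          (Filter.Eventually.of_forall (fun k => rfl)) |>.mono_right (by rw [mul_zero]))
      · have hk : (0:ℝ) < 2*(k:ℝ)+1 := by positivity
        exact mul_nonneg (ha0 j) (div_nonneg (le_min (abs_nonneg _) hk.le) hk.le)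
      · have hk : (0:ℝ) < 2*(k:ℝ)+1 := by positivity
        calc a j * (min |(j:ℝ)| (2*(k:ℝ)+1) / (2*(k:ℝ)+1))
            ≤ a j * (|(j:ℝ)| / (2*(k:ℝ)+1)) :=
              mul_le_mul_of_nonneg_left
                ((div_le_div_iff_of_pos_right hk).mpr (min_le_left _ _)) (ha0 j)
          _ = a j * |(j:ℝ)| * (2*(k:ℝ)+1)⁻¹ := by ring
    · apply Filter.Eventually.of_forall
      intro k j
      have hk : (0:ℝ) < 2*(k:ℝ)+1 := by positivity
      have hmin0 : 0 ≤ min |(j:ℝ)| (2*(k:ℝ)+1) := le_min (abs_nonneg _) hk.le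
      rw [Real.norm_eq_abs, abs_of_nonneg (mul_nonneg (ha0 j) (div_nonneg hmin0 hk.le))]
      apply mul_le_of_le_one_right (ha0 j)
      rw [div_le_one hk]
      exact min_le_right _ _
  have hlim : Filter.Tendsto (fun k : ℕ => C^2 * Sa *
      (2 * ∑' j : ℤ, a j * (min |(j:ℝ)| (2*(k:ℝ)+1) / (2*(k:ℝ)+1))))
      Filter.atTop (nhds 0) := by
    have := (hlim0.const_mul (C^2 * Sa * 2))
    rw [mul_zero] at this
    apply this.congr
    intro k
    ring
  have : (1:ℝ) ≤ 0 := ge_of_tendsto' hlim hone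
  linarith

lemma exists_ker_of_not_isUnit {V : Type} [NormedAddCommGroup V] [InnerProductSpace ℂ V]
    [FiniteDimensional ℂ V] (S : V →L[ℂ] V) (h : ¬ IsUnit S) :
    ∃ v : V, v ≠ 0 ∧ S v = 0 := by
  by_contra hno
  push_neg at hno
  apply h
  have hinj : Function.Injective S := by
    intro x y hxy
    by_contra hne
    exact hno (x - y) (sub_ne_zero.mpr hne) (by rw [map_sub, hxy, sub_self])
  have hsurj : Function.Surjective (S : V →ₗ[ℂ] V) :=
    LinearMap.injective_iff_surjective.mp hinj
  set e : V ≃ₗ[ℂ] V := LinearEquiv.ofBijective (S : V →ₗ[ℂ] V) ⟨hinj, hsurj⟩ with he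
  set e' : V ≃L[ℂ] V := e.toContinuousLinearEquiv with he'
  have hcoe : ∀ x, e' x = S x := fun x => rfl
  refine ⟨⟨S, (e'.symm : V →L[ℂ] V), ?_, ?_⟩, rfl⟩
  · ext x
    simp only [ContinuousLinearMap.mul_apply, ContinuousLinearMap.coe_coe,
      ContinuousLinearMap.one_apply]
    rw [← hcoe]
    exact e'.apply_symm_apply x
  · ext x
    simp only [ContinuousLinearMap.mul_apply, ContinuousLinearMap.coe_coe,
      ContinuousLinearMap.one_apply]
    rw [← hcoe]
    exact e'.symm_apply_apply x

theorem symbol_invertible_of_bulk_invertible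
    {V : Type} [NormedAddCommGroup V] [InnerProductSpace ℂ V] [FiniteDimensional ℂ V]
    (A : ℤ → 𝕋 → (V →L[ℂ] V)) (hAcont : ∀ j, Continuous (A j))
    (hAsum : Summable fun j : ℤ => ⨆ t : 𝕋, ‖A j t‖)
    (H : 𝕋 → (L2 V →L[ℂ] L2 V))
    (hH : ∀ (t : 𝕋) (φ : L2 V) (n : ℤ), H t φ n = ∑' j : ℤ, A j t (φ (n - j))) :
    (∀ (t : 𝕋) (z : ℂ), IsUnit (H t - z • (1 : L2 V →L[ℂ] L2 V)) →
      ∀ η : 𝕋, IsUnit ((∑' j : ℤ, ((η : ℂ) ^ j) • A j t) - z • (1 : V →L[ℂ] V))) ∧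
    (∀ (η : 𝕋) (t : 𝕋),
      spectrum ℂ (∑' j : ℤ, ((η : ℂ) ^ j) • A j t) ⊆ spectrum ℂ (H t)) := by
  classical
  have hcomplete : CompleteSpace V := FiniteDimensional.complete ℂ V
  set a : ℤ → ℝ := fun j => ⨆ t : 𝕋, ‖A j t‖ with ha
  have hbdd : ∀ j, BddAbove (Set.range fun t : 𝕋 => ‖A j t‖) :=
    fun j => (isCompact_range ((hAcont j).norm)).bddAbove
  have hAa : ∀ j t, ‖A j t‖ ≤ a j := fun j t => le_ciSup (hbdd j) t
  have ha0 : ∀ j, 0 ≤ a j := fun j => Real.iSup_nonneg (fun t => norm_nonneg _)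
  have part1 : ∀ (t : 𝕋) (z : ℂ), IsUnit (H t - z • (1 : L2 V →L[ℂ] L2 V)) →
      ∀ η : 𝕋, IsUnit ((∑' j : ℤ, ((η : ℂ) ^ j) • A j t) - z • (1 : V →L[ℂ] V)) := by
    intro t z hz η
    by_contra hnu
    obtain ⟨v, hv0, hv⟩ := exists_ker_of_not_isUnit _ hnu
    have hη1 : ‖(η : ℂ)‖ = 1 := by
      simpa using mem_sphere_zero_iff_norm.mp η.2
    have hSsum : Summable (fun j : ℤ => ((η : ℂ)) ^ j • A j t) := by
      apply Summable.of_norm_bounded hAsum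
      intro j
      rw [norm_smul, norm_zpow, hη1, one_zpow, one_mul]
      exact hAa j t
    have hpt : (∑' j : ℤ, ((η : ℂ)) ^ j • (A j t v)) = z • v := by
      have h1 : (∑' j : ℤ, ((η : ℂ)) ^ j • A j t) v = z • v := by
        have h2 : ((∑' j : ℤ, ((η : ℂ)) ^ j • A j t) - z • (1 : V →L[ℂ] V)) v = 0 := hv
        simp only [ContinuousLinearMap.sub_apply, ContinuousLinearMap.smul_apply,
          ContinuousLinearMap.one_apply, sub_eq_zero] at h2
        exact h2
      calc ∑' j : ℤ, ((η : ℂ)) ^ j • (A j t v)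
          = ∑' j : ℤ, (ContinuousLinearMap.apply ℂ V v) (((η : ℂ)) ^ j • A j t) := rfl
        _ = (ContinuousLinearMap.apply ℂ V v) (∑' j : ℤ, ((η : ℂ)) ^ j • A j t) :=
            ((ContinuousLinearMap.apply ℂ V v).map_tsum hSsum).symm
        _ = z • v := h1
    exact core (fun j => A j t) a (fun j => hAa j t) ha0 hAsum (H t) z (hH t)
      ((η : ℂ)) hη1 v hv0 hpt hz
  refine ⟨part1, ?_⟩
  intro η t z hz
  by_contra hzH
  rw [spectrum.notMem_iff] at hzH
  have h1 : IsUnit (H t - z • (1 : L2 V →L[ℂ] L2 V)) := by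
    have := hzH.neg
    rwa [neg_sub, Algebra.algebraMap_eq_smul_one] at this
  have h2 := part1 t z h1 η
  have h3 : IsUnit ((algebraMap ℂ (V →L[ℂ] V)) z - (∑' j : ℤ, ((η : ℂ) ^ j) • A j t)) := by
    have := h2.neg
    rwa [neg_sub, ← Algebra.algebraMap_eq_smul_one] at this
  exact (spectrum.notMem_iff.mpr h3) hz
end
end

section
/- Suppose k ≥ 1 and A_j = 0 for all |j| > k. Let t ∈ 𝕋 and z ∈ ℂ be such that T := H(t) − z·1 is invertible as a bounded operator on ℓ²(ℤ;V). Then (P_{≥k} T P_{≥0})(P_{≥0} T^{−1} P_{≥k}) ψ = ψ for every ψ ∈ ℓ²(ℤ_{≥k};V); in particular the compression P_{≥k}(H(t) − z)P_{≥0} : ℓ²(ℤ_{≥0};V) → ℓ²(ℤ_{≥k};V) is surjective. -/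
/-!
STATEMENT 5: Suppose k ≥ 1 and A_j = 0 for all |j| > k.  Let t ∈ 𝕋, z ∈ ℂ be such that
T := H(t) − z·1 is invertible on ℓ²(ℤ;V) (with inverse T⁻¹).  Then
(P≥k T P≥0)(P≥0 T⁻¹ P≥k) ψ = ψ for every ψ ∈ ℓ²(ℤ≥k;V); in particular the compression
P≥k (H(t) − z) P≥0 : ℓ²(ℤ≥0;V) → ℓ²(ℤ≥k;V) is surjective.
(ℓ²(ℤ≥m;V) is realized as the subspace of ℓ²(ℤ;V) of sequences vanishing in degrees < m,
and P≥m denotes the orthogonal projection onto it, i.e. (P≥m φ)ₙ = φₙ if m ≤ n, else 0.)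
-/

noncomputable section

local notation "𝕋" => Metric.sphere (0 : ℂ) 1

theorem compression_right_inverse_and_surjective
    {V : Type} [NormedAddCommGroup V] [InnerProductSpace ℂ V] [FiniteDimensional ℂ V]
    (A : ℤ → 𝕋 → (V →L[ℂ] V)) (hAcont : ∀ j, Continuous (A j))
    (hAsum : Summable fun j : ℤ => ⨆ t : 𝕋, ‖A j t‖)
    (H : 𝕋 → (L2 V →L[ℂ] L2 V))
    (hH : ∀ (t : 𝕋) (φ : L2 V) (n : ℤ), H t φ n = ∑' j : ℤ, A j t (φ (n - j)))
    (P : ℤ → (L2 V →L[ℂ] L2 V))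
    (hP : ∀ (m : ℤ) (φ : L2 V) (n : ℤ), P m φ n = if m ≤ n then φ n else 0)
    (k : ℤ) (hk : 1 ≤ k) (hfin : ∀ j : ℤ, k < |j| → A j = 0)
    (t : 𝕋) (z : ℂ) (T' : L2 V →L[ℂ] L2 V)
    (hT1 : (H t - z • 1).comp T' = 1) (hT2 : T'.comp (H t - z • 1) = 1) :
    (∀ ψ : L2 V, (∀ n : ℤ, n < k → ψ n = 0) →
      ((P k).comp ((H t - z • 1).comp (P 0)))
        (((P 0).comp (T'.comp (P k))) ψ) = ψ) ∧
    (∀ ψ : L2 V, (∀ n : ℤ, n < k → ψ n = 0) →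
      ∃ φ : L2 V, (∀ n : ℤ, n < 0 → φ n = 0) ∧
        ((P k).comp ((H t - z • 1).comp (P 0))) φ = ψ) := by
  have key : ∀ ψ : L2 V, (∀ n : ℤ, n < k → ψ n = 0) →
      ((P k).comp ((H t - z • 1).comp (P 0)))
        (((P 0).comp (T'.comp (P k))) ψ) = ψ := by
    intro ψ hψ
    set u : L2 V := T' (P k ψ) with hu
    have hPk : P k ψ = ψ := by
      apply lp.ext; funext n
      rw [hP]
      by_cases h : k ≤ n
      · simp [h]
      · simp [h, hψ n (lt_of_not_ge h)]
    have hφdef : ((P 0).comp (T'.comp (P k))) ψ = P 0 u := by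
      simp [ContinuousLinearMap.comp_apply, hu]
    rw [hφdef]
    have hP00 : P 0 (P 0 u) = P 0 u := by
      apply lp.ext; funext n
      rw [hP, hP]
      by_cases h : (0:ℤ) ≤ n <;> simp [h]
    have hcoeff : ∀ n : ℤ, k ≤ n → (H t (P 0 u)) n = (H t u) n := by
      intro n hn
      rw [hH, hH]
      apply tsum_congr
      intro j
      by_cases hj : |j| ≤ k
      · have : (0:ℤ) ≤ n - j := by
          have := le_trans (le_abs_self j) hj; omega
        rw [hP]
        simp [this, show j ≤ n by omega]
      · have hA : A j = 0 := hfin j (lt_of_not_ge hj)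
        simp [hA]
    have hTu : (H t - z • 1) u = P k ψ := by
      have := congrArg (fun f : L2 V →L[ℂ] L2 V => f (P k ψ)) hT1
      simpa [ContinuousLinearMap.comp_apply, hu] using this
    apply lp.ext; funext n
    simp only [ContinuousLinearMap.comp_apply]
    rw [hP00, hP]
    by_cases h : k ≤ n
    · have hn0 : (0:ℤ) ≤ n := by omega
      have h1 : ((H t - z • 1) (P 0 u)) n = (H t (P 0 u)) n - z • (P 0 u) n := by
        simp [ContinuousLinearMap.sub_apply, ContinuousLinearMap.smul_apply]; rfl
      have h2 : ((H t - z • 1) u) n = (H t u) n - z • u n := by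
        simp [ContinuousLinearMap.sub_apply, ContinuousLinearMap.smul_apply]; rfl
      have hP0un : (P 0 u) n = u n := by
        rw [hP]; simp [hn0]
      rw [if_pos h, h1, hcoeff n h, hP0un, ← h2, hTu, hPk]
    · rw [if_neg h]
      exact (hψ n (lt_of_not_ge h)).symm
  refine ⟨key, fun ψ hψ => ⟨((P 0).comp (T'.comp (P k))) ψ, ?_, key ψ hψ⟩⟩
  intro n hn
  simp only [ContinuousLinearMap.comp_apply]
  rw [hP]
  simp [not_le.mpr hn]
end
end

section
/- Assume H(t) is self-adjoint for every t ∈ 𝕋. Let k ≥ 1 be an integer, t ∈ 𝕋 and z ∈ ℂ such that H(t) − z·1 is invertible on ℓ²(ℤ;V), the compression P_{≥k}(H(t) − z)P_{≥0} : ℓ²(ℤ_{≥0};V) → ℓ²(ℤ_{≥k};V) is surjective, and moreover ker(H^#(t) − z) = {0}. Then the linear map g_{z,t} : (E_GP)_{z,t} → V^{⊕k}, φ ↦ (H^#(t) − z)φ, is a linear isomorphism. -/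
/-!
STATEMENT 11 (cf. Remark 10 of the paper): With H(t) self-adjoint, H(t) − z·1 invertible,
the compression P≥k (H(t) − z) P≥0 surjective, and ker(H♯(t) − z) = {0}, the map
g_{z,t} : (E_GP)_{z,t} → V^{⊕k}, φ ↦ (H♯(t) − z)φ, is a linear isomorphism (a bijection
between (E_GP)_{z,t} and the subspace V^{⊕k} of sequences supported in degrees 0,…,k−1).
-/

noncomputable section

local notation "𝕋" => Metric.sphere (0 : ℂ) 1

open ContinuousLinearMap in
/-- A bounded operator on a Hilbert space which is injective, has injective adjoint,
and whose range has a finite-dimensional algebraic complement, is surjective. -/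
lemma key_surjective {E : Type*} [NormedAddCommGroup E] [InnerProductSpace ℂ E]
    [CompleteSpace E] (T : E →L[ℂ] E) (W : Submodule ℂ E) [FiniteDimensional ℂ W]
    (hinj : Function.Injective T)
    (hadj : ∀ x : E, ContinuousLinearMap.adjoint T x = 0 → x = 0)
    (hspan : ∀ y : E, ∃ x : E, ∃ w ∈ W, T x + w = y) :
    Function.Surjective T := by
  classical
  set K : Submodule ℂ E := LinearMap.range (T : E →ₗ[ℂ] E) with hK
  obtain ⟨q, hq⟩ := Submodule.exists_isCompl ((K ⊓ W).comap W.subtype)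
  set W' : Submodule ℂ E := q.map W.subtype with hW'
  have hW'leW : W' ≤ W := by
    rintro x ⟨y, hy, rfl⟩; exact y.2
  haveI : FiniteDimensional ℂ W' := by
    have e := Submodule.equivMapOfInjective W.subtype W.injective_subtype q
    exact Module.Finite.equiv e
  have hKW'bot : ∀ x : E, x ∈ K → x ∈ W' → x = 0 := by
    rintro x hxK ⟨y, hy, rfl⟩
    have h1 : y ∈ ((K ⊓ W).comap W.subtype) := by
      simp only [Submodule.mem_comap]
      exact ⟨hxK, y.2⟩
    have : y ∈ ((K ⊓ W).comap W.subtype) ⊓ q := ⟨h1, hy⟩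
    rw [hq.inf_eq_bot] at this
    rw [(Submodule.mem_bot _).1 this]
    simp
  have hKW'top : ∀ y : E, ∃ x : E, ∃ w ∈ W', T x + w = y := by
    intro y
    obtain ⟨x, w, hwW, hxw⟩ := hspan y
    have : (⟨w, hwW⟩ : W) ∈ ((K ⊓ W).comap W.subtype) ⊔ q := by
      rw [hq.sup_eq_top]; trivial
    rw [Submodule.mem_sup] at this
    obtain ⟨u, hu, v, hv, huv⟩ := this
    simp only [Submodule.mem_comap] at hu
    obtain ⟨x', hx'⟩ : ∃ x', T x' = (u : E) := hu.1
    refine ⟨x + x', W.subtype v, ⟨v, hv, rfl⟩, ?_⟩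
    have hw : w = (u : E) + (v : E) := by
      have := congrArg (W.subtype) huv
      simpa using this.symm
    rw [map_add, hx']
    rw [hw] at hxw
    rw [← hxw]; abel
  let Φ : (E × W') →L[ℂ] E :=
    T.comp (ContinuousLinearMap.fst ℂ E W') +
      W'.subtypeL.comp (ContinuousLinearMap.snd ℂ E W')
  have hΦ : ∀ p : E × W', Φ p = T p.1 + (p.2 : E) := fun p => rfl
  have hΦinj : LinearMap.ker (Φ : (E × W') →ₗ[ℂ] E) = ⊥ := by
    rw [LinearMap.ker_eq_bot']
    rintro ⟨x, w⟩ h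
    change Φ (x, w) = 0 at h
    rw [hΦ] at h
    have hx : T x ∈ K := ⟨x, rfl⟩
    have hwW' : -T x ∈ W' := by
      have : (w : E) = -T x := by rw [← add_eq_zero_iff_eq_neg']; simpa [add_comm] using h
      rw [← this]; exact w.2
    have : -T x ∈ K := K.neg_mem hx
    have h0 : -T x = (0 : E) := hKW'bot _ this hwW'
    have hx0 : T x = 0 := by simpa [neg_eq_zero] using h0
    have : x = 0 := hinj (by simpa using hx0)
    subst this
    have : (w : E) = 0 := by simpa [hx0] using h
    simp [Prod.ext_iff, Subtype.ext_iff, this]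
  have hΦsurj : LinearMap.range (Φ : (E × W') →ₗ[ℂ] E) = ⊤ := by
    rw [LinearMap.range_eq_top]
    intro y
    obtain ⟨x, w, hwW', hxw⟩ := hKW'top y
    exact ⟨(x, ⟨w, hwW'⟩), hxw⟩
  haveI : CompleteSpace W' := FiniteDimensional.complete ℂ W'
  let e : (E × W') ≃L[ℂ] E := ContinuousLinearEquiv.ofBijective Φ hΦinj hΦsurj
  have hKclosed : IsClosed (K : Set E) := by
    have himg : (K : Set E) = e.symm ⁻¹' {p : E × W' | p.2 = 0} := by
      ext y
      constructor
      · rintro ⟨x, rfl⟩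
        have : e (x, 0) = (T : E →ₗ[ℂ] E) x := by
          show Φ (x, 0) = T x
          simp [hΦ]
        simp only [Set.mem_preimage, Set.mem_setOf_eq]
        rw [← this, ContinuousLinearEquiv.symm_apply_apply]
      · intro hy
        have : e.symm y = (((e.symm y).1 : E), (0 : W')) := by
          ext
          · rfl
          · exact congrArg Subtype.val hy
        have h2 : y = e ((e.symm y).1, (0 : W')) := by
          conv_lhs => rw [← e.apply_symm_apply y]
          rw [← this]
        refine ⟨(e.symm y).1, ?_⟩
        rw [h2]
        show T _ = Φ _
        simp [hΦ]
    rw [himg]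
    exact (isClosed_eq continuous_snd continuous_const).preimage e.symm.continuous
  haveI : CompleteSpace K := hKclosed.completeSpace_coe
  have hKorth : Kᗮ = ⊥ := by
    rw [Submodule.eq_bot_iff]
    intro x hx
    refine hadj x ?_
    have h1 := (Submodule.mem_orthogonal K x).1 hx
    have h2 : ∀ y : E, (inner ℂ y (ContinuousLinearMap.adjoint T x) : ℂ) = 0 := by
      intro y
      rw [ContinuousLinearMap.adjoint_inner_right]
      exact h1 _ ⟨y, rfl⟩
    have := h2 (ContinuousLinearMap.adjoint T x)
    rwa [inner_self_eq_zero] at this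
  have hKtop : K = ⊤ := Submodule.orthogonal_eq_bot_iff.mp hKorth
  intro y
  have : y ∈ K := hKtop ▸ Submodule.mem_top
  exact this

set_option maxHeartbeats 1000000 in
theorem grafPorta_g_isomorphism_of_no_edge_states
    {V : Type} [NormedAddCommGroup V] [InnerProductSpace ℂ V] [FiniteDimensional ℂ V]
    (A : ℤ → 𝕋 → (V →L[ℂ] V)) (hAcont : ∀ j, Continuous (A j))
    (hAsum : Summable fun j : ℤ => ⨆ t : 𝕋, ‖A j t‖)
    (H : 𝕋 → (L2 V →L[ℂ] L2 V))
    (hH : ∀ (t : 𝕋) (φ : L2 V) (n : ℤ), H t φ n = ∑' j : ℤ, A j t (φ (n - j)))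
    (hSA : ∀ t : 𝕋, IsSelfAdjoint (H t))
    (P : ℤ → (L2 V →L[ℂ] L2 V))
    (hP : ∀ (m : ℤ) (φ : L2 V) (n : ℤ), P m φ n = if m ≤ n then φ n else 0)
    (k : ℤ) (hk : 1 ≤ k) (t : 𝕋) (z : ℂ)
    (hz : IsUnit (H t - z • (1 : L2 V →L[ℂ] L2 V)))
    (hsurj : ∀ ψ : L2 V, (∀ n : ℤ, n < k → ψ n = 0) →
      ∃ φ : L2 V, (∀ n : ℤ, n < 0 → φ n = 0) ∧
        ((P k).comp ((H t - z • 1).comp (P 0))) φ = ψ)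
    (hker : ∀ φ : L2 V, (∀ n : ℤ, n < 0 → φ n = 0) →
      ((P 0).comp ((H t).comp (P 0))) φ = z • φ → φ = 0) :
    Set.BijOn (fun φ : L2 V => ((P 0).comp ((H t).comp (P 0))) φ - z • φ)
      {φ : L2 V | (∀ n : ℤ, n < 0 → φ n = 0) ∧
        ∀ n : ℤ, k ≤ n → ((H t - z • 1) φ) n = 0}
      {ψ : L2 V | ∀ n : ℤ, (n < 0 ∨ k ≤ n) → ψ n = 0} := by
  classical
  -- notation
  set p : L2 V →L[ℂ] L2 V := P 0 with hpdef
  set Hz : L2 V →L[ℂ] L2 V := H t - z • (1 : L2 V →L[ℂ] L2 V) with hHzdef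
  set B : L2 V →L[ℂ] L2 V := (P 0).comp ((H t).comp (P 0)) with hBdef
  -- coordinatewise lemmas for lp operations
  have csub : ∀ (f g : L2 V) (n : ℤ), (f - g) n = f n - g n := by
    intro f g n; rw [lp.coeFn_sub]; rfl
  have cadd : ∀ (f g : L2 V) (n : ℤ), (f + g) n = f n + g n := by
    intro f g n; rw [lp.coeFn_add]; rfl
  have csmul : ∀ (c : ℂ) (f : L2 V) (n : ℤ), (c • f) n = c • f n := by
    intro c f n; rw [lp.coeFn_smul]; rfl
  have czero : ∀ n : ℤ, (0 : L2 V) n = 0 := by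
    intro n; rw [lp.coeFn_zero]; rfl
  have hp0 : ∀ (φ : L2 V) (n : ℤ), p φ n = if 0 ≤ n then φ n else 0 := fun φ n => hP 0 φ n
  -- `Hz` coordinatewise
  have cHz : ∀ (φ : L2 V) (n : ℤ), Hz φ n = (H t) φ n - z • φ n := by
    intro φ n
    rw [hHzdef, ContinuousLinearMap.sub_apply, csub, ContinuousLinearMap.smul_apply,
      ContinuousLinearMap.one_apply, csmul]
  -- support lemma: `p φ = φ` for φ supported in nonnegative degrees
  have hpfix : ∀ φ : L2 V, (∀ n : ℤ, n < 0 → φ n = 0) → p φ = φ := by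
    intro φ hφ
    apply lp.ext
    funext n
    rw [hp0]
    by_cases hn : 0 ≤ n
    · rw [if_pos hn]
    · rw [if_neg hn, (hφ n (lt_of_not_ge hn))]
  have hppfix : ∀ φ : L2 V, p (p φ) = p φ := by
    intro φ
    apply hpfix
    intro n hn
    rw [hp0, if_neg (not_le.2 hn)]
  -- p is self-adjoint
  have hpadj : ContinuousLinearMap.adjoint p = p := by
    symm
    rw [ContinuousLinearMap.eq_adjoint_iff]
    intro x y
    rw [lp.inner_eq_tsum, lp.inner_eq_tsum]
    apply tsum_congr
    intro n
    rw [hp0, hp0]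
    by_cases hn : 0 ≤ n
    · rw [if_pos hn, if_pos hn]
    · rw [if_neg hn, if_neg hn, inner_zero_left, inner_zero_right]
  -- B is self-adjoint
  have hBadj : ContinuousLinearMap.adjoint B = B := by
    rw [hBdef, ContinuousLinearMap.adjoint_comp, ContinuousLinearMap.adjoint_comp]
    rw [show ContinuousLinearMap.adjoint (P 0) = p from hpadj,
      ContinuousLinearMap.isSelfAdjoint_iff'.1 (hSA t)]
    rfl
  -- the auxiliary operator T
  set T : L2 V →L[ℂ] L2 V := p.comp (Hz.comp p) + (1 - p) with hTdef
  have hTapp : ∀ φ : L2 V, T φ = p (Hz (p φ)) + (φ - p φ) := by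
    intro φ; rfl
  -- for φ supported in nonnegative degrees, T φ = B φ - z • φ
  have hTB : ∀ φ : L2 V, (∀ n : ℤ, n < 0 → φ n = 0) → T φ = B φ - z • φ := by
    intro φ hφ
    rw [hTapp, hpfix φ hφ, sub_self, add_zero, hHzdef]
    rw [ContinuousLinearMap.sub_apply, map_sub, ContinuousLinearMap.smul_apply,
      ContinuousLinearMap.one_apply, map_smul]
    rw [show B φ = p ((H t) (p φ)) from rfl, hpfix φ hφ]
  -- T x has the same coordinates as x in negative degrees
  have hTneg : ∀ (x : L2 V) (n : ℤ), n < 0 → T x n = x n := by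
    intro x n hn
    rw [hTapp, cadd, csub, hp0, hp0, if_neg (not_le.2 hn), if_neg (not_le.2 hn), sub_zero,
      zero_add]
  -- T is injective
  have hTinj : Function.Injective T := by
    intro x y hxy
    have h0 : T (x - y) = 0 := by rw [map_sub, hxy, sub_self]
    have hsupp : ∀ n : ℤ, n < 0 → (x - y) n = 0 := by
      intro n hn
      rw [← hTneg (x - y) n hn, h0, czero]
    have hd : B (x - y) = z • (x - y) := by
      have := hTB (x - y) hsupp
      rw [h0] at this
      have := this.symm
      rwa [sub_eq_zero] at this
    have : x - y = 0 := hker (x - y) hsupp hd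
    rwa [sub_eq_zero] at this
  -- adjoint of T
  have hadjT : ContinuousLinearMap.adjoint T =
      p.comp ((ContinuousLinearMap.adjoint Hz).comp p) + (1 - p) := by
    rw [hTdef, map_add, map_sub, ContinuousLinearMap.adjoint_comp,
      ContinuousLinearMap.adjoint_comp, hpadj, ContinuousLinearMap.one_def,
      ContinuousLinearMap.adjoint_id, ← ContinuousLinearMap.one_def]
    rfl
  have hadjHz : ContinuousLinearMap.adjoint Hz = H t - (starRingEnd ℂ z) • 1 := by
    rw [hHzdef, map_sub, ContinuousLinearMap.isSelfAdjoint_iff'.1 (hSA t)]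
    congr 1
    have h1 : ContinuousLinearMap.adjoint (z • (1 : L2 V →L[ℂ] L2 V)) =
        (starRingEnd ℂ z) • ContinuousLinearMap.adjoint (1 : L2 V →L[ℂ] L2 V) :=
      map_smulₛₗ _ _ _
    rw [h1, ContinuousLinearMap.one_def, ContinuousLinearMap.adjoint_id]
  -- kernel of the adjoint of T is trivial
  have hadjker : ∀ x : L2 V, ContinuousLinearMap.adjoint T x = 0 → x = 0 := by
    intro x hx
    rw [hadjT] at hx
    have hx' : p ((ContinuousLinearMap.adjoint Hz) (p x)) + (x - p x) = 0 := by
      rw [ContinuousLinearMap.add_apply, ContinuousLinearMap.comp_apply,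
        ContinuousLinearMap.comp_apply, ContinuousLinearMap.sub_apply,
        ContinuousLinearMap.one_apply] at hx
      exact hx
    have hsupp : ∀ n : ℤ, n < 0 → x n = 0 := by
      intro n hn
      have hcoord := congrArg (fun f : L2 V => f n) hx'
      simp only at hcoord
      rw [cadd, csub, hp0, hp0, if_neg (not_le.2 hn), if_neg (not_le.2 hn), sub_zero,
        zero_add, czero] at hcoord
      exact hcoord
    have hpx : p x = x := hpfix x hsupp
    have h2 : p ((ContinuousLinearMap.adjoint Hz) x) = 0 := by
      rw [hpx, sub_self, add_zero] at hx'
      exact hx'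
    have h3 : B x = (starRingEnd ℂ z) • x := by
      rw [hadjHz] at h2
      rw [ContinuousLinearMap.sub_apply, ContinuousLinearMap.smul_apply,
        ContinuousLinearMap.one_apply, map_sub, map_smul, hpx] at h2
      have hBx : B x = p ((H t) x) := by
        rw [show B x = p ((H t) (p x)) from rfl, hpx]
      rw [sub_eq_zero] at h2
      rw [hBx, h2]
    by_cases hzr : (starRingEnd ℂ) z = z
    · rw [hzr] at h3
      exact hker x hsupp h3
    · have e1 : (inner ℂ ((ContinuousLinearMap.adjoint B) x) x : ℂ) = inner ℂ x (B x) :=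
        ContinuousLinearMap.adjoint_inner_left B x x
      rw [hBadj] at e1
      rw [h3, inner_smul_left, inner_smul_right, starRingEnd_self_apply] at e1
      have hxx : (inner ℂ x x : ℂ) = 0 := by
        by_contra hne
        exact hzr (mul_right_cancel₀ hne e1).symm
      exact inner_self_eq_zero.1 hxx
  -- the finite-dimensional subspace of sequences supported in [0, k)
  set Wset : Set (L2 V) := {ψ : L2 V | ∀ n : ℤ, (n < 0 ∨ k ≤ n) → ψ n = 0} with hWset
  let Wsub : Submodule ℂ (L2 V) :=
    { carrier := Wset
      add_mem' := by
        intro a b ha hb n hn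
        rw [cadd, ha n hn, hb n hn, add_zero]
      zero_mem' := by
        intro n hn
        exact czero n
      smul_mem' := by
        intro c a ha n hn
        rw [csmul, ha n hn, smul_zero] }
  haveI : FiniteDimensional ℂ Wsub := by
    let ev : Wsub →ₗ[ℂ] (↥(Finset.Ico (0:ℤ) k) → V) :=
      { toFun := fun w i => (w : L2 V) i
        map_add' := by
          intro a b
          funext i
          show ((a + b : Wsub) : L2 V) (i : ℤ) = (a : L2 V) i + (b : L2 V) i
          rw [Submodule.coe_add, cadd]
        map_smul' := by
          intro c a
          funext i
          show ((c • a : Wsub) : L2 V) (i : ℤ) = c • (a : L2 V) i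
          rw [Submodule.coe_smul, csmul] }
    have hev : Function.Injective ev := by
      intro a b hab
      apply Subtype.ext
      apply lp.ext
      funext n
      by_cases hn : n < 0 ∨ k ≤ n
      · rw [a.2 n hn, b.2 n hn]
      · push_neg at hn
        have hmem : n ∈ Finset.Ico (0:ℤ) k := Finset.mem_Ico.2 ⟨hn.1, hn.2⟩
        exact congrFun hab ⟨n, hmem⟩
    exact FiniteDimensional.of_injective ev hev
  -- range of T plus Wsub spans everything
  have hspan : ∀ y : L2 V, ∃ x : L2 V, ∃ w ∈ Wsub, T x + w = y := by
    intro y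
    have hψ : ∀ n : ℤ, n < k → (P k) y n = 0 := by
      intro n hn
      rw [hP, if_neg (not_le.2 hn)]
    obtain ⟨φ₀, hφ₀supp, hφ₀eq⟩ := hsurj ((P k) y) hψ
    have hpφ₀ : p φ₀ = φ₀ := hpfix φ₀ hφ₀supp
    have hpx : p ((y - p y) + φ₀) = φ₀ := by
      rw [map_add, map_sub, hppfix, sub_self, zero_add, hpφ₀]
    have hTx : T ((y - p y) + φ₀) = p (Hz φ₀) + (y - p y) := by
      rw [hTapp, hpx]
      congr 1
      abel
    have hw : y - T ((y - p y) + φ₀) = p (y - Hz φ₀) := by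
      rw [hTx, map_sub]
      abel
    refine ⟨(y - p y) + φ₀, y - T ((y - p y) + φ₀), ?_, by abel⟩
    intro n hn
    rw [hw, hp0]
    rcases hn with hn | hn
    · rw [if_neg (not_le.2 hn)]
    · have h0n : 0 ≤ n := le_trans (le_trans zero_le_one hk) hn
      rw [if_pos h0n, csub]
      have hc := congrArg (fun f : L2 V => f n) hφ₀eq
      simp only at hc
      rw [ContinuousLinearMap.comp_apply, ContinuousLinearMap.comp_apply, hpφ₀, hP, hP,
        if_pos hn, if_pos hn] at hc
      rw [hc, sub_self]
  have hTsurj : Function.Surjective T := key_surjective T Wsub hTinj hadjker hspan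
  -- assembling the bijection
  refine ⟨?_, ?_, ?_⟩
  · -- maps to
    intro φ hφ
    obtain ⟨h1, h2⟩ := hφ
    intro n hn
    have hBφ : B φ n = if 0 ≤ n then (H t) φ n else 0 := by
      rw [show B φ = p ((H t) (p φ)) from rfl, hpfix φ h1, hp0]
    rcases hn with hn | hn
    · rw [csub, csmul, hBφ, if_neg (not_le.2 hn), h1 n hn, smul_zero, sub_zero]
    · have h0n : 0 ≤ n := le_trans (le_trans zero_le_one hk) hn
      have h3 := h2 n hn
      rw [cHz] at h3
      rw [csub, csmul, hBφ, if_pos h0n]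
      exact h3
  · -- injective on
    intro φ₁ h₁ φ₂ h₂ heq
    simp only at heq
    have hsupp : ∀ n : ℤ, n < 0 → (φ₁ - φ₂) n = 0 := by
      intro n hn
      rw [csub, h₁.1 n hn, h₂.1 n hn, sub_zero]
    have hd : B (φ₁ - φ₂) = z • (φ₁ - φ₂) := by
      rw [map_sub, smul_sub]
      rw [sub_eq_sub_iff_sub_eq_sub] at heq
      exact heq
    have := hker _ hsupp hd
    exact sub_eq_zero.1 this
  · -- surjective on
    intro ψ hψ
    obtain ⟨x, hTx⟩ := hTsurj ψ
    have hxsupp : ∀ n : ℤ, n < 0 → x n = 0 := by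
      intro n hn
      rw [← hTneg x n hn, hTx]
      exact hψ n (Or.inl hn)
    have hgx : B x - z • x = ψ := by
      rw [← hTB x hxsupp, hTx]
    refine ⟨x, ⟨hxsupp, ?_⟩, hgx⟩
    intro n hn
    have h0n : 0 ≤ n := le_trans (le_trans zero_le_one hk) hn
    have hc := congrArg (fun f : L2 V => f n) hgx
    simp only at hc
    rw [csub, csmul] at hc
    have hBx : B x n = (H t) x n := by
      rw [show B x = p ((H t) (p x)) from rfl, hpfix x hxsupp, hp0, if_pos h0n]
    rw [hBx] at hc
    rw [cHz, hc]
    exact hψ n (Or.inr hn)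
end
end

section
/- Let V be a finite-dimensional complex inner product space, X a topological space, A : X → End_ℂ(V) a continuous map such that A(x) is self-adjoint for every x ∈ X, and μ ∈ ℝ such that μ is not an eigenvalue of A(x) for any x ∈ X. For each x let P(x) ∈ End_ℂ(V) denote the spectral projection of A(x) for the part of the spectrum lying in (−∞, μ), i.e. the orthogonal projection onto the sum of the eigenspaces of A(x) with eigenvalue < μ. Then x ↦ P(x) is continuous, each P(x) is an orthogonal projection commuting with A(x), and the function x ↦ rank P(x) is locally constant on X. -/
/-!
STATEMENT 14: Continuity of the family of spectral (Riesz) projections below a spectral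
gap.  Let V be a finite-dimensional complex inner product space, X a topological space,
A : X → End(V) continuous with every A(x) self-adjoint, and μ ∈ ℝ not an eigenvalue of
any A(x).  Let P(x) be the orthogonal projection onto the sum of the eigenspaces of A(x)
with eigenvalue < μ.  Then x ↦ P(x) is continuous, each P(x) is an orthogonal projection
(self-adjoint idempotent) commuting with A(x), and x ↦ rank P(x) is locally constant.
-/

noncomputable section

open Module LinearMap
open scoped InnerProductSpace

namespace SpectralProjAux

variable {V : Type} [NormedAddCommGroup V] [InnerProductSpace ℂ V] [FiniteDimensional ℂ V]

variable (T : V →L[ℂ] V) (hT : (↑T : V →ₗ[ℂ] V).IsSymmetric)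

/-- Functional calculus of a selfadjoint operator defined via a fixed eigenbasis. -/
def Phi (f : ℝ → ℝ) : V →L[ℂ] V :=
  ∑ i : Fin (finrank ℂ V),
    ((f (hT.eigenvalues rfl i) : ℝ) : ℂ) •
      ((innerSL ℂ (hT.eigenvectorBasis rfl i)).smulRight (hT.eigenvectorBasis rfl i))

lemma Phi_apply (f : ℝ → ℝ) (v : V) :
    Phi T hT f v = ∑ i, (((f (hT.eigenvalues rfl i) : ℝ) : ℂ) *
      ⟪hT.eigenvectorBasis rfl i, v⟫_ℂ) • hT.eigenvectorBasis rfl i := by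
  simp only [Phi, ContinuousLinearMap.sum_apply, ContinuousLinearMap.smul_apply,
    ContinuousLinearMap.smulRight_apply, innerSL_apply_apply, smul_smul]

lemma inner_Phi (f : ℝ → ℝ) (v : V) (j : Fin (finrank ℂ V)) :
    ⟪hT.eigenvectorBasis rfl j, Phi T hT f v⟫_ℂ
      = ((f (hT.eigenvalues rfl j) : ℝ) : ℂ) * ⟪hT.eigenvectorBasis rfl j, v⟫_ℂ := by
  rw [Phi_apply]
  exact (hT.eigenvectorBasis rfl).orthonormal.inner_right_fintype _ j

lemma Phi_apply_basis (f : ℝ → ℝ) (j : Fin (finrank ℂ V)) :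
    Phi T hT f (hT.eigenvectorBasis rfl j)
      = ((f (hT.eigenvalues rfl j) : ℝ) : ℂ) • hT.eigenvectorBasis rfl j := by
  have hb := (hT.eigenvectorBasis (n := finrank ℂ V) rfl).orthonormal
  rw [orthonormal_iff_ite] at hb
  rw [Phi_apply, Finset.sum_eq_single j]
  · rw [hb j j]; simp [smul_smul]
  · intro i _ hij; rw [hb i j, if_neg hij]; simp
  · simp

lemma clm_ext_basis {ι : Type*} [Fintype ι] (b : OrthonormalBasis ι ℂ V) {S₁ S₂ : V →L[ℂ] V}
    (h : ∀ j, S₁ (b j) = S₂ (b j)) : S₁ = S₂ := by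
  apply ContinuousLinearMap.coe_injective
  apply b.toBasis.ext
  intro i
  simpa using h i

lemma Phi_sub (f g : ℝ → ℝ) :
    Phi T hT f - Phi T hT g = Phi T hT (fun t => f t - g t) := by
  rw [Phi, Phi, Phi, ← Finset.sum_sub_distrib]
  refine Finset.sum_congr rfl fun i _ => ?_
  rw [← sub_smul]
  norm_cast

lemma Phi_norm_le {f : ℝ → ℝ} {c : ℝ} (hc : 0 ≤ c)
    (hfc : ∀ i, |f (hT.eigenvalues rfl i)| ≤ c) : ‖Phi T hT f‖ ≤ c := by
  refine ContinuousLinearMap.opNorm_le_bound _ hc fun v => ?_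
  have h1 : ‖Phi T hT f v‖ = Real.sqrt (∑ j, ‖(hT.eigenvectorBasis rfl).repr (Phi T hT f v) j‖ ^ 2) := by
    rw [← (hT.eigenvectorBasis rfl).repr.norm_map (Phi T hT f v), EuclideanSpace.norm_eq]
  have h2 : ‖v‖ = Real.sqrt (∑ j, ‖(hT.eigenvectorBasis rfl).repr v j‖ ^ 2) := by
    rw [← (hT.eigenvectorBasis rfl).repr.norm_map v, EuclideanSpace.norm_eq]
  rw [h1, h2]
  have key : ∀ j, ‖(hT.eigenvectorBasis rfl).repr (Phi T hT f v) j‖ ^ 2 ≤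
      c ^ 2 * ‖(hT.eigenvectorBasis rfl).repr v j‖ ^ 2 := by
    intro j
    simp only [OrthonormalBasis.repr_apply_apply]
    rw [inner_Phi, norm_mul, mul_pow]
    have hb : ‖((f (hT.eigenvalues rfl j) : ℝ) : ℂ)‖ ≤ c := by
      rw [Complex.norm_real, Real.norm_eq_abs]; exact hfc j
    exact mul_le_mul_of_nonneg_right (pow_le_pow_left₀ (norm_nonneg _) hb 2) (by positivity)
  calc Real.sqrt (∑ j, ‖(hT.eigenvectorBasis rfl).repr (Phi T hT f v) j‖ ^ 2)
      ≤ Real.sqrt (∑ j, c ^ 2 * ‖(hT.eigenvectorBasis rfl).repr v j‖ ^ 2) :=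
        Real.sqrt_le_sqrt (Finset.sum_le_sum fun j _ => key j)
    _ = c * Real.sqrt (∑ j, ‖(hT.eigenvectorBasis rfl).repr v j‖ ^ 2) := by
        rw [← Finset.mul_sum, Real.sqrt_mul (by positivity), Real.sqrt_sq hc]


/-- Evaluation of a real polynomial on an operator. -/
def evalPoly (q : Polynomial ℝ) (S : V →L[ℂ] V) : V →L[ℂ] V :=
  ∑ i ∈ Finset.range (q.natDegree + 1), ((q.coeff i : ℝ) : ℂ) • S ^ i

lemma continuous_evalPoly (q : Polynomial ℝ) :
    Continuous fun S : V →L[ℂ] V => evalPoly q S := by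
  unfold evalPoly
  exact continuous_finset_sum _ fun i _ => (continuous_pow i).fun_const_smul _

lemma pow_apply_basis (k : ℕ) (j : Fin (finrank ℂ V)) :
    (T ^ k) (hT.eigenvectorBasis rfl j)
      = (((hT.eigenvalues rfl j : ℝ) : ℂ)) ^ k • hT.eigenvectorBasis rfl j := by
  induction k with
  | zero => simp
  | succ k ih =>
    have hb : T (hT.eigenvectorBasis rfl j)
        = ((hT.eigenvalues rfl j : ℝ) : ℂ) • hT.eigenvectorBasis rfl j :=
      hT.apply_eigenvectorBasis rfl j
    rw [pow_succ, ContinuousLinearMap.mul_apply, hb, map_smul, ih, smul_smul, ← pow_succ']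

lemma evalPoly_apply_basis (q : Polynomial ℝ) (j : Fin (finrank ℂ V)) :
    evalPoly q T (hT.eigenvectorBasis rfl j)
      = ((q.eval (hT.eigenvalues rfl j) : ℝ) : ℂ) • hT.eigenvectorBasis rfl j := by
  rw [evalPoly, ContinuousLinearMap.sum_apply]
  simp_rw [ContinuousLinearMap.smul_apply, pow_apply_basis T hT, smul_smul]
  rw [← Finset.sum_smul]
  congr 1
  rw [Polynomial.eval_eq_sum_range]
  push_cast
  rfl

lemma Phi_polynomial (q : Polynomial ℝ) :
    Phi T hT (fun t => q.eval t) = evalPoly q T :=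
  clm_ext_basis (hT.eigenvectorBasis rfl) fun j => by
    rw [Phi_apply_basis, evalPoly_apply_basis]

lemma abs_eigenvalue_le (i : Fin (finrank ℂ V)) : |hT.eigenvalues rfl i| ≤ ‖T‖ := by
  have hb1 : ‖hT.eigenvectorBasis rfl i‖ = 1 := (hT.eigenvectorBasis rfl).orthonormal.1 i
  have h : T (hT.eigenvectorBasis rfl i)
      = ((hT.eigenvalues rfl i : ℝ) : ℂ) • hT.eigenvectorBasis rfl i :=
    hT.apply_eigenvectorBasis rfl i
  have h2 : ‖T (hT.eigenvectorBasis rfl i)‖ = |hT.eigenvalues rfl i| := by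
    rw [h, norm_smul, hb1, mul_one, Complex.norm_real, Real.norm_eq_abs]
  calc |hT.eigenvalues rfl i| = ‖T (hT.eigenvectorBasis rfl i)‖ := h2.symm
    _ ≤ ‖T‖ * ‖hT.eigenvectorBasis rfl i‖ := T.le_opNorm _
    _ = ‖T‖ := by rw [hb1, mul_one]

lemma le_norm_smul_sub (c e : ℝ) (he0 : 0 ≤ e)
    (he : ∀ i, e ≤ |c - hT.eigenvalues rfl i|) (v : V) :
    e * ‖v‖ ≤ ‖(c : ℂ) • v - T v‖ := by
  have hrepr : ∀ j, ⟪hT.eigenvectorBasis rfl j, (c : ℂ) • v - T v⟫_ℂ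
      = ((c - hT.eigenvalues rfl j : ℝ) : ℂ) * ⟪hT.eigenvectorBasis rfl j, v⟫_ℂ := by
    intro j
    have hb : T (hT.eigenvectorBasis rfl j)
        = ((hT.eigenvalues rfl j : ℝ) : ℂ) • hT.eigenvectorBasis rfl j :=
      hT.apply_eigenvectorBasis rfl j
    have hTv : ⟪hT.eigenvectorBasis rfl j, T v⟫_ℂ
        = ((hT.eigenvalues rfl j : ℝ) : ℂ) * ⟪hT.eigenvectorBasis rfl j, v⟫_ℂ := by
      have h0 : ⟪hT.eigenvectorBasis rfl j, T v⟫_ℂ = ⟪T (hT.eigenvectorBasis rfl j), v⟫_ℂ :=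
        (hT (hT.eigenvectorBasis rfl j) v).symm
      rw [h0, hb, inner_smul_left, Complex.conj_ofReal]
    rw [inner_sub_right, inner_smul_right, hTv]
    push_cast
    ring
  have h1 : ‖(c : ℂ) • v - T v‖
      = Real.sqrt (∑ j, ‖(hT.eigenvectorBasis rfl).repr ((c : ℂ) • v - T v) j‖ ^ 2) := by
    rw [← (hT.eigenvectorBasis rfl).repr.norm_map ((c : ℂ) • v - T v), EuclideanSpace.norm_eq]
  have h2 : ‖v‖ = Real.sqrt (∑ j, ‖(hT.eigenvectorBasis rfl).repr v j‖ ^ 2) := by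
    rw [← (hT.eigenvectorBasis rfl).repr.norm_map v, EuclideanSpace.norm_eq]
  rw [h1, h2, ← Real.sqrt_sq he0, ← Real.sqrt_mul (by positivity)]
  apply Real.sqrt_le_sqrt
  rw [Finset.mul_sum]
  refine Finset.sum_le_sum fun j _ => ?_
  simp only [OrthonormalBasis.repr_apply_apply]
  rw [hrepr j, norm_mul, mul_pow]
  have hb2 : e ≤ ‖((c - hT.eigenvalues rfl j : ℝ) : ℂ)‖ := by
    rw [Complex.norm_real, Real.norm_eq_abs]; exact he j
  exact mul_le_mul_of_nonneg_right (pow_le_pow_left₀ he0 hb2 2) (by positivity)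

lemma not_hasEigenvalue_of_gap {S : V →L[ℂ] V} (c e : ℝ) (he0 : 0 < e)
    (he : ∀ i, e ≤ |c - hT.eigenvalues rfl i|) (hS : ‖S - T‖ < e) :
    ¬ Module.End.HasEigenvalue (↑S : V →ₗ[ℂ] V) ((c : ℝ) : ℂ) := by
  intro h
  obtain ⟨v, hv⟩ := h.exists_hasEigenvector
  have hv0 : v ≠ 0 := hv.2
  have hveq : S v = (c : ℂ) • v := by
    have := Module.End.mem_eigenspace_iff.mp hv.1
    simpa using this
  have h1 := le_norm_smul_sub T hT c e he0.le he v
  have h2 : (c : ℂ) • v - T v = (S - T) v := by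
    rw [ContinuousLinearMap.sub_apply, hveq]
  have h3 : ‖(S - T) v‖ ≤ ‖S - T‖ * ‖v‖ := (S - T).le_opNorm v
  have h4 : 0 < ‖v‖ := norm_pos_iff.mpr hv0
  rw [h2] at h1
  nlinarith


lemma Phi_eq_proj (μ : ℝ) (f : ℝ → ℝ)
    (hf : ∀ i, f (hT.eigenvalues rfl i) = if hT.eigenvalues rfl i < μ then 1 else 0)
    (W' : Submodule ℂ V)
    (hW' : W' = ⨆ r : ℝ, ⨆ _ : r < μ, Module.End.eigenspace (↑T : V →ₗ[ℂ] V) (r : ℂ)) :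
    Phi T hT f = W'.subtypeL.comp (W'.orthogonalProjectionOnto) := by
  ext v
  rw [ContinuousLinearMap.comp_apply, Submodule.subtypeL_apply]
  refine (Submodule.eq_starProjection_of_mem_of_inner_eq_zero (K := W') ?_ ?_).symm
  · -- Phi T hT f v ∈ W'
    rw [Phi_apply]
    refine Submodule.sum_mem _ fun i _ => ?_
    by_cases h : hT.eigenvalues rfl i < μ
    · refine Submodule.smul_mem _ _ ?_
      rw [hW']
      refine Submodule.mem_iSup_of_mem (hT.eigenvalues rfl i) (Submodule.mem_iSup_of_mem h ?_)
      exact (hT.hasEigenvector_eigenvectorBasis rfl i).1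
    · rw [hf i, if_neg h]
      simp
  · intro w hw
    have hov : ∀ i, ¬ (hT.eigenvalues rfl i < μ) → ⟪hT.eigenvectorBasis rfl i, w⟫_ℂ = 0 := by
      intro i hi
      have hle : W' ≤ (ℂ ∙ (hT.eigenvectorBasis rfl i))ᗮ := by
        rw [hW']
        refine iSup_le fun r => iSup_le fun hr => ?_
        intro u hu
        rw [Submodule.mem_orthogonal_singleton_iff_inner_right]
        have hne : ((hT.eigenvalues rfl i : ℝ) : ℂ) ≠ ((r : ℝ) : ℂ) := by
          exact_mod_cast (lt_of_lt_of_le hr (not_lt.mp hi)).ne'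
        exact hT.orthogonalFamily_eigenspaces hne
          ⟨_, (hT.hasEigenvector_eigenvectorBasis rfl i).1⟩ ⟨u, hu⟩
      have := hle hw
      rwa [Submodule.mem_orthogonal_singleton_iff_inner_right] at this
    have hrepr : v - Phi T hT f v = ∑ i,
        ((1 - ((f (hT.eigenvalues rfl i) : ℝ) : ℂ)) * ⟪hT.eigenvectorBasis rfl i, v⟫_ℂ) •
          hT.eigenvectorBasis rfl i := by
      rw [Phi_apply]
      nth_rewrite 1 [← (hT.eigenvectorBasis rfl).sum_repr' v]
      rw [← Finset.sum_sub_distrib]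
      refine Finset.sum_congr rfl fun i _ => ?_
      rw [← sub_smul]
      congr 1
      ring
    rw [hrepr, sum_inner]
    refine Finset.sum_eq_zero fun i _ => ?_
    rw [inner_smul_left]
    by_cases hi : hT.eigenvalues rfl i < μ
    · rw [hf i, if_pos hi]
      simp
    · rw [hov i hi, mul_zero]

lemma Phi_comm (f : ℝ → ℝ) : (Phi T hT f).comp T = T.comp (Phi T hT f) := by
  refine clm_ext_basis (hT.eigenvectorBasis rfl) fun j => ?_
  have hb : T (hT.eigenvectorBasis rfl j)
      = ((hT.eigenvalues rfl j : ℝ) : ℂ) • hT.eigenvectorBasis rfl j :=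
    hT.apply_eigenvectorBasis rfl j
  rw [ContinuousLinearMap.comp_apply, ContinuousLinearMap.comp_apply, hb, map_smul,
    Phi_apply_basis, map_smul, hb, smul_comm]

/-- A continuous cutoff function: `1` below `μ - δ`, `0` above `μ + δ`. -/
def cutoff (μ δ : ℝ) : ℝ → ℝ := fun t => min 1 (max 0 ((μ + δ - t) / (2 * δ)))

lemma continuous_cutoff (μ δ : ℝ) : Continuous (cutoff μ δ) :=
  continuous_const.min (continuous_const.max ((continuous_const.sub continuous_id).div_const _))

lemma abs_cutoff_le (μ δ t : ℝ) : |cutoff μ δ t| ≤ 1 := by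
  rw [abs_le]
  constructor
  · have : (0:ℝ) ≤ cutoff μ δ t := le_min zero_le_one (le_max_left _ _)
    linarith
  · exact min_le_left _ _

lemma cutoff_eq (μ : ℝ) {δ t : ℝ} (hδ : 0 < δ) (ht : δ < |t - μ|) :
    cutoff μ δ t = if t < μ then 1 else 0 := by
  rcases lt_or_ge t μ with h | h
  · rw [if_pos h]
    rw [abs_of_neg (by linarith : t - μ < 0)] at ht
    have hs : (1:ℝ) ≤ (μ + δ - t) / (2 * δ) := by
      rw [le_div_iff₀ (by linarith : (0:ℝ) < 2 * δ)]
      linarith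
    unfold cutoff
    rw [min_eq_left (le_max_of_le_right hs)]
  · rw [if_neg (not_lt.mpr h)]
    rw [abs_of_nonneg (by linarith : (0:ℝ) ≤ t - μ)] at ht
    have hs : (μ + δ - t) / (2 * δ) ≤ 0 :=
      le_of_lt (div_neg_of_neg_of_pos (by linarith) (by linarith))
    unfold cutoff
    rw [max_eq_left hs, min_eq_right zero_le_one]

lemma exists_pos_le {n : ℕ} (g : Fin n → ℝ) (hg : ∀ i, 0 < g i) :
    ∃ d > 0, ∀ i, d ≤ g i := by
  rcases isEmpty_or_nonempty (Fin n) with h | h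
  · exact ⟨1, one_pos, fun i => (h.false i).elim⟩
  · refine ⟨Finset.univ.inf' Finset.univ_nonempty g, ?_, fun i => Finset.inf'_le g (Finset.mem_univ i)⟩
    show (0:ℝ) < Finset.univ.inf' Finset.univ_nonempty g
    rw [Finset.lt_inf'_iff]
    exact fun i _ => hg i

lemma nat_eq_of_dist_lt {m k : ℕ} (h : ‖(m : ℂ) - (k : ℂ)‖ < 1) : m = k := by
  by_contra hne
  have h1 : (1 : ℤ) ≤ |(m : ℤ) - (k : ℤ)| :=
    Int.one_le_abs (sub_ne_zero.mpr (by exact_mod_cast hne))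
  have h2 : (1 : ℝ) ≤ |(m : ℝ) - (k : ℝ)| := by exact_mod_cast h1
  have h3 : ‖(m:ℂ) - (k:ℂ)‖ = |(m:ℝ) - (k:ℝ)| := by
    rw [show (m:ℂ) - (k:ℂ) = (((m:ℝ) - (k:ℝ) : ℝ) : ℂ) by push_cast; ring,
      Complex.norm_real, Real.norm_eq_abs]
  rw [h3] at h
  linarith

end SpectralProjAux

open SpectralProjAux Topology Filter


theorem spectral_projection_continuous_rank_locally_constant
    {V : Type} [NormedAddCommGroup V] [InnerProductSpace ℂ V] [FiniteDimensional ℂ V]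
    {X : Type} [TopologicalSpace X]
    (A : X → (V →L[ℂ] V)) (hA : Continuous A)
    (hsa : ∀ x, IsSelfAdjoint (A x))
    (μ : ℝ) (hμ : ∀ x, ¬ Module.End.HasEigenvalue (A x : V →ₗ[ℂ] V) (μ : ℂ))
    (W : X → Submodule ℂ V)
    (hW : ∀ x, W x = ⨆ r : ℝ, ⨆ _ : r < μ,
      Module.End.eigenspace (A x : V →ₗ[ℂ] V) (r : ℂ))
    (P : X → (V →L[ℂ] V))
    (hP : ∀ x, P x = (W x).subtypeL.comp ((W x).orthogonalProjectionOnto)) :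
    Continuous P ∧
    (∀ x, IsSelfAdjoint (P x) ∧ (P x).comp (P x) = P x ∧
      (P x).comp (A x) = (A x).comp (P x)) ∧
    IsLocallyConstant fun x => Module.finrank ℂ (LinearMap.range (P x : V →ₗ[ℂ] V)) := by
  classical
  have hsym : ∀ x, ((A x : V →ₗ[ℂ] V)).IsSymmetric := fun x => (hsa x).isSymmetric
  -- an abstract representation lemma
  have hPphi : ∀ x (f : ℝ → ℝ),
      (∀ i, f ((hsym x).eigenvalues rfl i) = if (hsym x).eigenvalues rfl i < μ then 1 else 0) →
      P x = Phi (A x) (hsym x) f := by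
    intro x f hf
    rw [hP x]
    exact (Phi_eq_proj (A x) (hsym x) μ f hf (W x) (hW x)).symm
  -- Part 1 : continuity
  have contP : Continuous P := by
    rw [continuous_iff_continuousAt]
    intro x₀
    rw [ContinuousAt, Metric.tendsto_nhds]
    intro ε hε
    have hpos : ∀ i, 0 < |(hsym x₀).eigenvalues rfl i - μ| := by
      intro i
      rw [abs_pos, sub_ne_zero]
      intro hEq
      have := (hsym x₀).hasEigenvalue_eigenvalues rfl i
      rw [hEq] at this
      exact hμ x₀ this
    obtain ⟨d, hd, hdle⟩ := exists_pos_le _ hpos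
    set δ := d / 3 with hδdef
    have hδ : 0 < δ := by positivity
    -- the spectral gap persists for nearby operators
    have gap : ∀ (S : V →L[ℂ] V), ‖S - A x₀‖ < δ → ∀ c : ℝ, |c - μ| ≤ δ →
        ¬ Module.End.HasEigenvalue (↑S : V →ₗ[ℂ] V) ((c : ℝ) : ℂ) := by
      intro S hS c hc
      refine not_hasEigenvalue_of_gap (A x₀) (hsym x₀) c (2 * δ) (by positivity) ?_ (by linarith)
      intro i
      have h1 := hdle i
      have h2 := abs_sub_le ((hsym x₀).eigenvalues rfl i) c μ
      rw [abs_sub_comm c ((hsym x₀).eigenvalues rfl i)]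
      linarith
    set f := cutoff μ δ with hfdef
    set M := ‖A x₀‖ + δ with hM
    obtain ⟨q, hq⟩ := exists_polynomial_near_of_continuousOn (-M) M f
      (continuous_cutoff μ δ).continuousOn (ε/4) (by positivity)
    have h1 : ∀ᶠ x in 𝓝 x₀, ‖A x - A x₀‖ < δ := by
      filter_upwards [(hA.tendsto x₀).eventually_mem (Metric.ball_mem_nhds (A x₀) hδ)] with x hx
      rwa [Metric.mem_ball, dist_eq_norm] at hx
    have hcont2 : Continuous fun x => evalPoly q (A x) := (continuous_evalPoly q).comp hA
    have h2 : ∀ᶠ x in 𝓝 x₀, ‖evalPoly q (A x) - evalPoly q (A x₀)‖ < ε/4 := by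
      filter_upwards [(hcont2.tendsto x₀).eventually_mem
        (Metric.ball_mem_nhds _ (by positivity : (0:ℝ) < ε/4))] with x hx
      rwa [Metric.mem_ball, dist_eq_norm] at hx
    have key : ∀ y, ‖A y - A x₀‖ < δ →
        P y = Phi (A y) (hsym y) f ∧ ‖Phi (A y) (hsym y) f - evalPoly q (A y)‖ ≤ ε/4 := by
      intro y hy
      have hev : ∀ i, δ < |(hsym y).eigenvalues rfl i - μ| := by
        intro i
        by_contra hcon
        push_neg at hcon
        exact gap (A y) hy _ hcon ((hsym y).hasEigenvalue_eigenvalues rfl i)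
      have hf : ∀ i, f ((hsym y).eigenvalues rfl i)
          = if (hsym y).eigenvalues rfl i < μ then 1 else 0 :=
        fun i => cutoff_eq μ hδ (hev i)
      refine ⟨hPphi y f hf, ?_⟩
      have hnorm : ‖A y‖ ≤ M := by
        calc ‖A y‖ = ‖A x₀ + (A y - A x₀)‖ := by rw [add_sub_cancel]
          _ ≤ ‖A x₀‖ + ‖A y - A x₀‖ := norm_add_le _ _
          _ ≤ M := by rw [hM]; linarith
      have heig : ∀ i, (hsym y).eigenvalues rfl i ∈ Set.Icc (-M) M := by
        intro i
        have h := abs_le.mp (le_trans (abs_eigenvalue_le (A y) (hsym y) i) hnorm)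
        exact ⟨h.1, h.2⟩
      rw [← Phi_polynomial (A y) (hsym y) q, Phi_sub]
      refine Phi_norm_le (A y) (hsym y) (by positivity) fun i => ?_
      have hqi := hq _ (heig i)
      rw [abs_sub_comm] at hqi
      exact hqi.le
    filter_upwards [h1, h2] with x hx1 hx2
    obtain ⟨hpx, hbx⟩ := key x hx1
    obtain ⟨hpx₀, hbx₀⟩ := key x₀ (by rw [sub_self, norm_zero]; exact hδ)
    rw [hpx, hpx₀]
    calc dist (Phi (A x) (hsym x) f) (Phi (A x₀) (hsym x₀) f)
        ≤ dist (Phi (A x) (hsym x) f) (evalPoly q (A x))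
          + dist (evalPoly q (A x)) (evalPoly q (A x₀))
          + dist (evalPoly q (A x₀)) (Phi (A x₀) (hsym x₀) f) := dist_triangle4 _ _ _ _
      _ < ε := by
          rw [dist_eq_norm, dist_eq_norm, dist_eq_norm,
            norm_sub_rev (evalPoly q (A x₀))]
          linarith
  -- Part 2 : projection properties
  have part2 : ∀ x, IsSelfAdjoint (P x) ∧ (P x).comp (P x) = P x ∧
      (P x).comp (A x) = (A x).comp (P x) := by
    intro x
    refine ⟨?_, ?_, ?_⟩
    · rw [hP x]; exact isSelfAdjoint_starProjection (W x)
    · rw [hP x]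
      ext v
      simp [ContinuousLinearMap.comp_apply, Submodule.starProjection_eq_self_iff]
    · rw [hPphi x (fun t => if t < μ then 1 else 0) (fun i => rfl)]
      exact Phi_comm (A x) (hsym x) _
  -- Part 3 : local constancy of the rank
  have hrange : ∀ x, LinearMap.range (P x : V →ₗ[ℂ] V) = W x := by
    intro x
    apply le_antisymm
    · intro v hv
      rw [LinearMap.mem_range] at hv
      obtain ⟨u, rfl⟩ := hv
      rw [hP x]
      simp only [ContinuousLinearMap.coe_coe, ContinuousLinearMap.comp_apply, Submodule.subtypeL_apply]
      exact Submodule.coe_mem _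
    · intro v hv
      refine ⟨v, ?_⟩
      rw [hP x]
      simp only [ContinuousLinearMap.coe_coe, ContinuousLinearMap.comp_apply, Submodule.subtypeL_apply]
      exact (Submodule.starProjection_eq_self_iff (K := W x)).mpr hv
  have hproj : ∀ x, LinearMap.IsProj (W x) (↑(P x) : V →ₗ[ℂ] V) := by
    intro x
    constructor
    · intro v
      show P x v ∈ W x
      rw [hP x]
      simp only [ContinuousLinearMap.comp_apply, Submodule.subtypeL_apply]
      exact Submodule.coe_mem _
    · intro v hv
      show P x v = v
      rw [hP x]
      simp only [ContinuousLinearMap.comp_apply, Submodule.subtypeL_apply]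
      exact (Submodule.starProjection_eq_self_iff (K := W x)).mpr hv
  have htrace : ∀ x, (LinearMap.trace ℂ V) (↑(P x) : V →ₗ[ℂ] V)
      = (Module.finrank ℂ (LinearMap.range (P x : V →ₗ[ℂ] V)) : ℂ) := by
    intro x
    rw [(hproj x).trace, hrange x]
  have contTr : Continuous fun x => (LinearMap.trace ℂ V) (↑(P x) : V →ₗ[ℂ] V) :=
    ((LinearMap.trace ℂ V).comp
      (ContinuousLinearMap.coeLM ℂ)).continuous_of_finiteDimensional.comp contP
  refine ⟨contP, part2, ?_⟩
  rw [IsLocallyConstant.iff_eventually_eq]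
  intro x₀
  filter_upwards [(contTr.tendsto x₀).eventually_mem (Metric.ball_mem_nhds _ one_pos)] with x hx
  rw [Metric.mem_ball, dist_eq_norm, htrace x, htrace x₀] at hx
  exact nat_eq_of_dist_lt hx
end
end
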